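/- arXiv:2510.18265 — 4 statements merged into one kernel-verified Lean document; each statement's English description precedes it below -/
import Mathlib

section
/- For 1 < m ≤ n, the m-degree of the Cartesian product S_n □ S_m equals m + 2. -/
open SimpleGraph

/-- The star graph with a central vertex `0` and `n` leaves. -/
def starGraph (n : ℕ) : SimpleGraph (Fin (n+1)) where
  Adj u v := u ≠ v ∧ (u = 0 ∨ v = 0)
  symm := by
    constructor
    intro u v h
    exact ⟨h.1.symm, h.2.symm⟩
  loopless := by
    constructor
    intro u h
    exact h.1 rfl

/-- A proper coloring with `k` colors which is a b-coloring: every color class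
contains a vertex adjacent to at least one vertex of every other color class. -/
def IsBColoring {V : Type*} (G : SimpleGraph V) (k : ℕ) (c : V → Fin k) : Prop :=
  (∀ u v, G.Adj u v → c u ≠ c v) ∧
    ∀ i : Fin k, ∃ v, c v = i ∧ ∀ j : Fin k, j ≠ i → ∃ u, G.Adj v u ∧ c u = j

/-- `G` admits a b-coloring with `k` colors. -/
def HasBColoring {V : Type*} (G : SimpleGraph V) (k : ℕ) : Prop :=
  ∃ c : V → Fin k, IsBColoring G k c

/-- The set of `k` such that `G` has a b-coloring with `k` colors.  The
b-chromatic number of `G` is the greatest element of this set. -/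
def bChromaticSet {V : Type*} (G : SimpleGraph V) : Set ℕ :=
  {k | HasBColoring G k}

/-- The set of `i` such that `G` has at least `i` vertices of degree at least `i - 1`.
The m-degree of `G` is the greatest element of this set. -/
def mDegreeSet {V : Type*} (G : SimpleGraph V) : Set ℕ :=
  {i | ∃ S : Set V, S.Finite ∧ S.ncard = i ∧ ∀ v ∈ S, i - 1 ≤ (G.neighborSet v).ncard}

/-- The line graph of `G`: vertices are the edges of `G`, two being adjacent iff
they are distinct and share an endpoint. -/
def lineGraph {V : Type*} (G : SimpleGraph V) : SimpleGraph G.edgeSet where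
  Adj e f := e ≠ f ∧ ∃ v, v ∈ (e : Sym2 V) ∧ v ∈ (f : Sym2 V)
  symm := by
    constructor
    rintro e f ⟨hne, v, hv1, hv2⟩
    exact ⟨hne.symm, v, hv2, hv1⟩
  loopless := by
    constructor
    rintro e ⟨hne, -⟩
    exact hne rfl

/-- The total graph of `G`: vertices are `V(G) ⊕ E(G)`; adjacency is vertex
adjacency, vertex-edge incidence, or edge adjacency. -/
def totalGraph {V : Type*} (G : SimpleGraph V) : SimpleGraph (V ⊕ G.edgeSet) where
  Adj x y :=
    match x, y with
    | .inl u, .inl v => G.Adj u v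
    | .inl u, .inr e => u ∈ (e : Sym2 V)
    | .inr e, .inl u => u ∈ (e : Sym2 V)
    | .inr e, .inr f => e ≠ f ∧ ∃ v, v ∈ (e : Sym2 V) ∧ v ∈ (f : Sym2 V)
  symm := by
    constructor
    rintro (u | e) (v | f) h
    · exact h.symm
    · exact h
    · exact h
    · exact ⟨h.1.symm, h.2.choose, h.2.choose_spec.2, h.2.choose_spec.1⟩
  loopless := by
    constructor
    rintro (u | e) h
    · exact G.loopless.irrefl u h
    · exact h.1 rfl

/-- The `p`-th power of `G`: same vertices, `u ~ v` iff `0 < d(u,v) ≤ p`. -/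
def graphPower {V : Type*} (G : SimpleGraph V) (p : ℕ) : SimpleGraph V where
  Adj u v := 0 < G.dist u v ∧ G.dist u v ≤ p
  symm := by
    constructor
    intro u v h
    rwa [SimpleGraph.dist_comm]
  loopless := by
    constructor
    intro u h
    simp [SimpleGraph.dist_self] at h

lemma starGraph_adj {n : ℕ} {a b : Fin (n+1)} :
    (_root_.starGraph n).Adj a b ↔ a ≠ b ∧ (a = 0 ∨ b = 0) := Iff.rfl

lemma ncard_ge_of_inj {α : Type*} [Fintype α] {s : Set α} {k : ℕ} (f : Fin k → α)
    (hinj : Function.Injective f) (hmem : ∀ i, f i ∈ s) : k ≤ s.ncard := by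
  have h1 : (Set.range f).ncard = k := by
    rw [← Nat.card_coe_set_eq, Nat.card_range_of_injective hinj,
      Nat.card_eq_fintype_card, Fintype.card_fin]
  calc k = (Set.range f).ncard := h1.symm
    _ ≤ s.ncard := Set.ncard_le_ncard (Set.range_subset_iff.mpr hmem) s.toFinite

lemma ncard_le_of_inj {α β : Type*} [Fintype β] {s : Set α} (f : s → β)
    (hinj : Function.Injective f) : s.ncard ≤ Fintype.card β := by
  rw [← Nat.card_coe_set_eq, ← Nat.card_eq_fintype_card]
  exact Nat.card_le_card_of_injective f hinj

lemma neighbor_small (n m : ℕ) {v : Fin (n+1) × Fin (m+1)} (hv : v.1 ≠ 0) :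
    (((_root_.starGraph n).boxProd (_root_.starGraph m)).neighborSet v).ncard ≤ m + 1 := by
  set s := ((_root_.starGraph n).boxProd (_root_.starGraph m)).neighborSet v with hs
  have key : ∀ w ∈ s, (w.1 = 0 ∧ w.2 = v.2) ∨ (w.1 = v.1 ∧ w.2 ≠ v.2) := by
    intro w hw
    rw [hs, SimpleGraph.mem_neighborSet, SimpleGraph.boxProd_adj, _root_.starGraph_adj,
      _root_.starGraph_adj] at hw
    rcases hw with ⟨⟨hne, h0⟩, heq⟩ | ⟨⟨hne, h0⟩, heq⟩
    · exact Or.inl ⟨h0.resolve_left hv, heq.symm⟩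
    · exact Or.inr ⟨heq.symm, fun h => hne h.symm⟩
  have : s.ncard ≤ Fintype.card (Fin (m+1)) := by
    apply ncard_le_of_inj (fun w => if (w : Fin (n+1) × Fin (m+1)).1 = 0 then v.2
      else (w : Fin (n+1) × Fin (m+1)).2)
    intro w₁ w₂ heq
    rcases key w₁ w₁.2 with ⟨h1, h2⟩ | ⟨h1, h2⟩ <;>
      rcases key w₂ w₂.2 with ⟨h3, h4⟩ | ⟨h3, h4⟩ <;>
      simp only [h1, h3, hv, if_true, ite_true, ite_false, if_false, eq_self_iff_true] at heq
    · exact Subtype.ext (Prod.ext (h1.trans h3.symm) (h2.trans h4.symm))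
    · exact absurd heq.symm h4
    · exact absurd heq h2
    · exact Subtype.ext (Prod.ext (h1.trans h3.symm) heq)
  simpa using this

theorem mDegree_boxProd_star (n m : ℕ) (hm : 1 < m) (hmn : m ≤ n) :
    IsGreatest (mDegreeSet ((_root_.starGraph n).boxProd (_root_.starGraph m))) (m + 2) := by
  have hn2 : 2 ≤ n := le_trans hm hmn
  have h1v : (1 : Fin (n+1)).val = 1 := by rw [Fin.val_one']; exact Nat.mod_eq_of_lt (by omega)
  have h1ne : (1 : Fin (n+1)) ≠ 0 := by
    intro h
    have := congrArg Fin.val h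
    rw [h1v] at this
    simp at this
  have hinj0 : Function.Injective (fun j : Fin (m+1) => ((0 : Fin (n+1)), j)) := by
    intro a b h
    exact (Prod.ext_iff.mp h).2
  have himgcard : ((fun j : Fin (m+1) => ((0 : Fin (n+1)), j)) '' Set.univ).ncard = m + 1 := by
    rw [Set.ncard_image_of_injective _ hinj0, Set.ncard_univ, Nat.card_eq_fintype_card,
      Fintype.card_fin]
  constructor
  · refine ⟨(fun j : Fin (m+1) => ((0 : Fin (n+1)), j)) '' Set.univ ∪
      {((1 : Fin (n+1)), (0 : Fin (m+1)))}, Set.toFinite _, ?_, ?_⟩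
    · have hd : Disjoint ((fun j : Fin (m+1) => ((0 : Fin (n+1)), j)) '' Set.univ)
          {((1 : Fin (n+1)), (0 : Fin (m+1)))} := by
        rw [Set.disjoint_singleton_right]
        rintro ⟨j, -, hj⟩
        exact h1ne ((Prod.ext_iff.mp hj).1).symm
      rw [Set.ncard_union_eq hd (Set.toFinite _) (Set.toFinite _), himgcard,
        Set.ncard_singleton]
    · intro v hv
      have hgoal : m + 2 - 1 = m + 1 := rfl
      rw [hgoal]
      rcases hv with ⟨j, -, hj⟩ | hv
      · -- v = (0, j)
        subst hj
        by_cases hj0 : j = 0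
        · subst hj0
          apply ncard_ge_of_inj
            (fun k : Fin (m+1) => if k = 0 then ((1 : Fin (n+1)), (0 : Fin (m+1)))
              else ((0 : Fin (n+1)), k))
          · intro a b h
            by_cases ha : a = 0 <;> by_cases hb : b = 0 <;>
              simp only [ha, hb, ite_true, ite_false, if_true, if_false] at h
            · rw [ha, hb]
            · exact absurd (Prod.ext_iff.mp h).1 h1ne
            · exact absurd (Prod.ext_iff.mp h).1 (Ne.symm h1ne)
            · exact (Prod.ext_iff.mp h).2
          · intro k
            by_cases hk : k = 0 <;>
              simp only [hk, ite_true, ite_false, if_true, if_false]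
            · exact Or.inl ⟨⟨fun h => h1ne h.symm, Or.inl rfl⟩, rfl⟩
            · exact Or.inr ⟨⟨fun h => hk h.symm, Or.inl rfl⟩, rfl⟩
        · apply ncard_ge_of_inj
            (fun k : Fin (m+1) => if k = 0 then ((0 : Fin (n+1)), (0 : Fin (m+1)))
              else ((Fin.castLE (show m+1 ≤ n+1 by omega) k : Fin (n+1)), j))
          · intro a b h
            by_cases ha : a = 0 <;> by_cases hb : b = 0 <;>
              simp only [ha, hb, ite_true, ite_false, if_true, if_false] at h
            · rw [ha, hb]
            · exact absurd (Prod.ext_iff.mp h).2.symm hj0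
            · exact absurd (Prod.ext_iff.mp h).2 hj0
            · exact Fin.castLE_injective (by omega) (Prod.ext_iff.mp h).1
          · intro k
            by_cases hk : k = 0 <;>
              simp only [hk, ite_true, ite_false, if_true, if_false]
            · exact Or.inr ⟨⟨hj0, Or.inr rfl⟩, rfl⟩
            · refine Or.inl ⟨⟨?_, Or.inl rfl⟩, rfl⟩
              intro h
              apply hk
              apply Fin.ext
              have := congrArg Fin.val h
              simpa using this.symm
      · -- v = (1, 0)
        rw [Set.mem_singleton_iff] at hv
        subst hv
        apply ncard_ge_of_inj
          (fun k : Fin (m+1) => if k = 0 then ((0 : Fin (n+1)), (0 : Fin (m+1)))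
            else ((1 : Fin (n+1)), k))
        · intro a b h
          by_cases ha : a = 0 <;> by_cases hb : b = 0 <;>
            simp only [ha, hb, ite_true, ite_false, if_true, if_false] at h
          · rw [ha, hb]
          · exact absurd (congrArg Prod.fst h).symm h1ne
          · exact absurd (congrArg Prod.fst h) h1ne
          · exact (Prod.ext_iff.mp h).2
        · intro k
          by_cases hk : k = 0 <;>
            simp only [hk, ite_true, ite_false, if_true, if_false]
          · exact Or.inl ⟨⟨h1ne, Or.inr rfl⟩, rfl⟩
          · exact Or.inr ⟨⟨fun h => hk h.symm, Or.inl rfl⟩, rfl⟩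
  · rintro k ⟨S, hSfin, hScard, hdeg⟩
    by_contra hlt
    push_neg at hlt
    have hsub : S ⊆ (fun j : Fin (m+1) => ((0 : Fin (n+1)), j)) '' Set.univ := by
      intro v hv
      have h1 := hdeg v hv
      by_contra hv0
      have hv1 : v.1 ≠ 0 := by
        intro h
        exact hv0 ⟨v.2, Set.mem_univ _, by rw [← h]⟩
      have h2 := neighbor_small n m hv1
      omega
    have := Set.ncard_le_ncard hsub (Set.toFinite _)
    rw [hScard, himgcard] at this
    omega
end

section
/- For n ≥ m ≥ 3 with n ≤ 2(m−1), the m-degree of the total graph T(S_n □ S_m) equals 2n + 3. -/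
open SimpleGraph

abbrev SG (n m : ℕ) : SimpleGraph (Fin (n+1) × Fin (m+1)) := (_root_.starGraph n).boxProd (_root_.starGraph m)
abbrev TG (n m : ℕ) := totalGraph (SG n m)

def hEdge (n m : ℕ) (u : Fin (n+1)) (hu : u ≠ 0) (b : Fin (m+1)) : (SG n m).edgeSet :=
  ⟨s((0,b),(u,b)), by
    rw [SimpleGraph.mem_edgeSet, SimpleGraph.boxProd_adj]
    exact Or.inl ⟨⟨fun h => hu h.symm, Or.inl rfl⟩, rfl⟩⟩

def vEdge (n m : ℕ) (a : Fin (n+1)) (v : Fin (m+1)) (hv : v ≠ 0) : (SG n m).edgeSet :=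
  ⟨s((a,0),(a,v)), by
    rw [SimpleGraph.mem_edgeSet, SimpleGraph.boxProd_adj]
    exact Or.inr ⟨⟨fun h => hv h.symm, Or.inl rfl⟩, rfl⟩⟩

lemma ncard_range_eq {ι α : Type*} [Finite ι] (f : ι → α) (hf : Function.Injective f) :
    (Set.range f).ncard = Nat.card ι := by
  rw [← Nat.card_coe_set_eq]
  exact Nat.card_congr (Equiv.ofInjective f hf).symm

lemma le_ncard_of_range_subset {ι α : Type*} [Finite ι] [Finite α] (f : ι → α) (s : Set α)
    (hf : Function.Injective f) (h : Set.range f ⊆ s) : Nat.card ι ≤ s.ncard := by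
  rw [← ncard_range_eq f hf]
  exact Set.ncard_le_ncard h s.toFinite

lemma deg_a {n m : ℕ} (hm : 1 ≤ m) :
    2*n+2 ≤ ((TG n m).neighborSet (Sum.inl (0, 0))).ncard := by
  classical
  have ho : (⟨1, by omega⟩ : Fin (m+1)) ≠ 0 := by
    simp [Fin.ext_iff]
  let o : Fin (m+1) := ⟨1, by omega⟩
  let f : Fin n ⊕ Fin n ⊕ Fin 1 ⊕ Fin 1 → (Fin (n+1) × Fin (m+1)) ⊕ (SG n m).edgeSet :=
    fun i => match i with
    | .inl u => Sum.inl (u.succ, 0)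
    | .inr (.inl u) => Sum.inr (hEdge n m u.succ (Fin.succ_ne_zero u) 0)
    | .inr (.inr (.inl _)) => Sum.inl (0, o)
    | .inr (.inr (.inr _)) => Sum.inr (vEdge n m 0 o ho)
  have hcard : Nat.card (Fin n ⊕ Fin n ⊕ Fin 1 ⊕ Fin 1) = 2*n+2 := by
    simp [Nat.card_eq_fintype_card]; ring
  have hinj : Function.Injective f := by
    rintro (u | u | u | u) (v | v | v | v) h <;>
      simp_all [f, o, hEdge, vEdge, Sym2.eq_iff, Prod.ext_iff, Fin.succ_ne_zero, ho,
        Fin.succ_injective n |>.eq_iff, Subtype.ext_iff] <;>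
      first
      | rfl
      | (exact absurd h.symm (Fin.succ_ne_zero _))
      | omega
  have hsub : Set.range f ⊆ (TG n m).neighborSet (Sum.inl (0, 0)) := by
    rintro x ⟨i, rfl⟩
    rcases i with u | u | u | u <;>
      simp only [f, SimpleGraph.mem_neighborSet]
    · show (SG n m).Adj (0, 0) (u.succ, 0)
      rw [SimpleGraph.boxProd_adj]
      exact Or.inl ⟨⟨(Fin.succ_ne_zero u).symm, Or.inl rfl⟩, rfl⟩
    · show ((0:Fin (n+1)), (0:Fin (m+1))) ∈ (hEdge n m u.succ (Fin.succ_ne_zero u) 0 : Sym2 _)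
      simp [hEdge]
    · show (SG n m).Adj (0, 0) (0, o)
      rw [SimpleGraph.boxProd_adj]
      exact Or.inr ⟨⟨ho.symm, Or.inl rfl⟩, rfl⟩
    · show ((0:Fin (n+1)), (0:Fin (m+1))) ∈ (vEdge n m 0 o ho : Sym2 _)
      simp [vEdge]
  calc 2*n+2 = Nat.card (Fin n ⊕ Fin n ⊕ Fin 1 ⊕ Fin 1) := hcard.symm
    _ ≤ _ := le_ncard_of_range_subset f _ hinj hsub

lemma deg_c {n m : ℕ} (b : Fin (m+1)) (hb : b ≠ 0) :
    2*n+2 ≤ ((TG n m).neighborSet (Sum.inr (vEdge n m 0 b hb))).ncard := by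
  classical
  let f : Fin n ⊕ Fin n ⊕ Fin 1 ⊕ Fin 1 → (Fin (n+1) × Fin (m+1)) ⊕ (SG n m).edgeSet :=
    fun i => match i with
    | .inl u => Sum.inr (hEdge n m u.succ (Fin.succ_ne_zero u) 0)
    | .inr (.inl u) => Sum.inr (hEdge n m u.succ (Fin.succ_ne_zero u) b)
    | .inr (.inr (.inl _)) => Sum.inl (0, 0)
    | .inr (.inr (.inr _)) => Sum.inl (0, b)
  have hcard : Nat.card (Fin n ⊕ Fin n ⊕ Fin 1 ⊕ Fin 1) = 2*n+2 := by
    simp [Nat.card_eq_fintype_card]; ring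
  have hinj : Function.Injective f := by
    rintro (u | u | u | u) (v | v | v | v) h <;>
      simp_all [f, hEdge, vEdge, Sym2.eq_iff, Prod.ext_iff, Fin.succ_ne_zero, hb,
        Fin.succ_injective n |>.eq_iff, Subtype.ext_iff] <;>
      first
      | rfl
      | (exact absurd h.symm (Fin.succ_ne_zero _))
      | (exact absurd h.symm hb)
      | omega
  have hsub : Set.range f ⊆ (TG n m).neighborSet (Sum.inr (vEdge n m 0 b hb)) := by
    rintro x ⟨i, rfl⟩
    rcases i with u | u | u | u <;>
      simp only [f, SimpleGraph.mem_neighborSet]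
    · show (TG n m).Adj (Sum.inr _) (Sum.inr _)
      refine ⟨?_, (0,0), ?_, ?_⟩ <;>
        simp [hEdge, vEdge, Subtype.ext_iff, Sym2.eq_iff, Prod.ext_iff, hb, Fin.succ_ne_zero,
          (Fin.succ_ne_zero u)]
    · show (TG n m).Adj (Sum.inr _) (Sum.inr _)
      refine ⟨?_, (0,b), ?_, ?_⟩ <;>
        simp [hEdge, vEdge, Subtype.ext_iff, Sym2.eq_iff, Prod.ext_iff, hb, Fin.succ_ne_zero,
          (Fin.succ_ne_zero u), Ne.symm hb]
    · show ((0:Fin (n+1)), (0:Fin (m+1))) ∈ (vEdge n m 0 b hb : Sym2 _)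
      simp [vEdge]
    · show ((0:Fin (n+1)), b) ∈ (vEdge n m 0 b hb : Sym2 _)
      simp [vEdge]
  calc 2*n+2 = Nat.card (Fin n ⊕ Fin n ⊕ Fin 1 ⊕ Fin 1) := hcard.symm
    _ ≤ _ := le_ncard_of_range_subset f _ hinj hsub

lemma deg_d {n m : ℕ} (hm : 1 ≤ m) (hnm : n ≤ 2*(m-1)) (a : Fin (n+1)) (ha : a ≠ 0) :
    2*n+2 ≤ ((TG n m).neighborSet (Sum.inr (hEdge n m a ha 0))).ncard := by
  classical
  let f : Fin n ⊕ Fin m ⊕ Fin m ⊕ Fin 1 → (Fin (n+1) × Fin (m+1)) ⊕ (SG n m).edgeSet :=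
    fun i => match i with
    | .inl u => if h : u.succ = a then Sum.inl (a, 0)
        else Sum.inr (hEdge n m u.succ (Fin.succ_ne_zero u) 0)
    | .inr (.inl v) => Sum.inr (vEdge n m 0 v.succ (Fin.succ_ne_zero v))
    | .inr (.inr (.inl v)) => Sum.inr (vEdge n m a v.succ (Fin.succ_ne_zero v))
    | .inr (.inr (.inr _)) => Sum.inl (0, 0)
  have hcard : Nat.card (Fin n ⊕ Fin m ⊕ Fin m ⊕ Fin 1) = n+2*m+1 := by
    simp [Nat.card_eq_fintype_card]; ring
  have hinj : Function.Injective f := by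
    rintro (u | u | u | u) (v | v | v | v) h <;>
      simp only [f] at h <;>
      (try split_ifs at h with h1 h2) <;>
      simp_all [hEdge, vEdge, Sym2.eq_iff, Prod.ext_iff, Fin.succ_ne_zero, ha,
        Fin.succ_injective _ |>.eq_iff, Subtype.ext_iff, Ne.symm ha, Fin.ext_iff,
        Fin.val_succ, -Fin.val_eq_zero_iff] <;>
      first
      | rfl
      | (exact absurd h.symm (Fin.succ_ne_zero _))
      | (exact absurd h (Fin.succ_ne_zero _))
      | omega
  have hsub : Set.range f ⊆ (TG n m).neighborSet (Sum.inr (hEdge n m a ha 0)) := by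
    rintro x ⟨i, rfl⟩
    rcases i with u | u | u | u <;>
      simp only [f, SimpleGraph.mem_neighborSet]
    · split_ifs with h1
      · show ((a, (0:Fin (m+1)))) ∈ (hEdge n m a ha 0 : Sym2 _)
        simp [hEdge]
      · show (TG n m).Adj (Sum.inr _) (Sum.inr _)
        refine ⟨?_, (0,0), ?_, ?_⟩
        · intro hEq
          simp [hEdge, Subtype.ext_iff, Sym2.eq_iff, Prod.ext_iff, ha, Ne.symm h1,
            Fin.succ_ne_zero] at hEq
          all_goals exact absurd hEq.symm (Fin.succ_ne_zero u)
        · simp [hEdge]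
        · simp [hEdge]
    · show (TG n m).Adj (Sum.inr _) (Sum.inr _)
      refine ⟨?_, (0,0), ?_, ?_⟩ <;>
        simp [hEdge, vEdge, Subtype.ext_iff, Sym2.eq_iff, Prod.ext_iff, Ne.symm ha, ha,
          Fin.succ_ne_zero]
    · show (TG n m).Adj (Sum.inr _) (Sum.inr _)
      refine ⟨?_, (a,0), ?_, ?_⟩ <;>
        simp [hEdge, vEdge, Subtype.ext_iff, Sym2.eq_iff, Prod.ext_iff, Ne.symm ha, ha,
          Fin.succ_ne_zero]
    · show ((0:Fin (n+1)), (0:Fin (m+1))) ∈ (hEdge n m a ha 0 : Sym2 _)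
      simp [hEdge]
  have := le_ncard_of_range_subset f _ hinj hsub
  rw [hcard] at this
  omega

lemma edge_cases {n m : ℕ} (e : (SG n m).edgeSet) :
    (∃ (u : Fin (n+1)) (hu : u ≠ 0) (b : Fin (m+1)), e = hEdge n m u hu b) ∨
    (∃ (a : Fin (n+1)) (v : Fin (m+1)) (hv : v ≠ 0), e = vEdge n m a v hv) := by
  obtain ⟨e, he⟩ := e
  induction e using Sym2.ind with
  | _ x y =>
    obtain ⟨x1, x2⟩ := x
    obtain ⟨y1, y2⟩ := y
    rw [SimpleGraph.mem_edgeSet, SimpleGraph.boxProd_adj] at he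
    rcases he with ⟨⟨hne, h0⟩, h2⟩ | ⟨⟨hne, h0⟩, h2⟩
    · simp only at h2
      subst h2
      rcases h0 with h0 | h0
      · subst h0
        exact Or.inl ⟨y1, fun h => hne h.symm, x2, Subtype.ext rfl⟩
      · subst h0
        exact Or.inl ⟨x1, hne, x2, Subtype.ext (Sym2.eq_swap)⟩
    · simp only at h2
      subst h2
      rcases h0 with h0 | h0
      · subst h0
        exact Or.inr ⟨x1, y2, fun h => hne h.symm, Subtype.ext rfl⟩
      · subst h0
        exact Or.inr ⟨x1, x2, hne, Subtype.ext (Sym2.eq_swap)⟩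

lemma ncard_le_of_subset_range {ι α : Type*} [Finite ι] (f : ι → α) (s : Set α)
    (h : s ⊆ Set.range f) : s.ncard ≤ Nat.card ι := by
  refine le_trans (Set.ncard_le_ncard h (Set.finite_range f)) ?_
  rw [← Nat.card_coe_set_eq]
  exact Finite.card_range_le f

lemma ub_i {n m : ℕ} (a : Fin (n+1)) (b : Fin (m+1)) (ha : a ≠ 0) (hb : b ≠ 0) :
    ((TG n m).neighborSet (Sum.inl (a,b))).ncard ≤ 4 := by
  classical
  let f : Fin 1 ⊕ Fin 1 ⊕ Fin 1 ⊕ Fin 1 → (Fin (n+1) × Fin (m+1)) ⊕ (SG n m).edgeSet :=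
    fun i => match i with
    | .inl _ => Sum.inl (0, b)
    | .inr (.inl _) => Sum.inl (a, 0)
    | .inr (.inr (.inl _)) => Sum.inr (hEdge n m a ha b)
    | .inr (.inr (.inr _)) => Sum.inr (vEdge n m a b hb)
  have := ncard_le_of_subset_range f ((TG n m).neighborSet (Sum.inl (a,b))) ?_
  · simpa [Nat.card_eq_fintype_card] using this
  rintro (⟨z1, z2⟩ | e) hy
  · rw [SimpleGraph.mem_neighborSet] at hy
    replace hy : (SG n m).Adj (a, b) (z1, z2) := hy
    rw [SimpleGraph.boxProd_adj] at hy
    rcases hy with ⟨⟨hne, h0⟩, h2⟩ | ⟨⟨hne, h0⟩, h2⟩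
    · simp only at h2; subst h2
      rcases h0 with h0 | h0
      · exact absurd h0 ha
      · subst h0; exact ⟨Sum.inl 0, rfl⟩
    · simp only at h2; subst h2
      rcases h0 with h0 | h0
      · exact absurd h0 hb
      · subst h0; exact ⟨Sum.inr (Sum.inl 0), rfl⟩
  · rw [SimpleGraph.mem_neighborSet] at hy
    replace hy : (a, b) ∈ (e : Sym2 _) := hy
    rcases edge_cases e with ⟨u, hu, c, rfl⟩ | ⟨a', w, hw, rfl⟩
    · simp only [hEdge, Sym2.mem_iff] at hy
      rcases hy with hy | hy
      · rw [Prod.ext_iff] at hy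
        exact absurd hy.1 ha
      · rw [Prod.ext_iff] at hy
        obtain ⟨h1, h2⟩ := hy
        subst h1; subst h2
        exact ⟨Sum.inr (Sum.inr (Sum.inl 0)), congrArg Sum.inr (Subtype.ext rfl)⟩
    · simp only [vEdge, Sym2.mem_iff] at hy
      rcases hy with hy | hy
      · rw [Prod.ext_iff] at hy
        exact absurd hy.2 hb
      · rw [Prod.ext_iff] at hy
        obtain ⟨h1, h2⟩ := hy
        subst h1; subst h2
        exact ⟨Sum.inr (Sum.inr (Sum.inr 0)), congrArg Sum.inr (Subtype.ext rfl)⟩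

lemma ub_ii {n m : ℕ} (a : Fin (n+1)) (ha : a ≠ 0) :
    ((TG n m).neighborSet (Sum.inl (a,(0:Fin (m+1))))).ncard ≤ 2*m+2 := by
  classical
  let f : Fin 1 ⊕ Fin 1 ⊕ Fin m ⊕ Fin m → (Fin (n+1) × Fin (m+1)) ⊕ (SG n m).edgeSet :=
    fun i => match i with
    | .inl _ => Sum.inl (0, 0)
    | .inr (.inl _) => Sum.inr (hEdge n m a ha 0)
    | .inr (.inr (.inl v)) => Sum.inl (a, v.succ)
    | .inr (.inr (.inr v)) => Sum.inr (vEdge n m a v.succ (Fin.succ_ne_zero v))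
  have := ncard_le_of_subset_range f ((TG n m).neighborSet (Sum.inl (a,0))) ?_
  · simp only [Nat.card_eq_fintype_card, Fintype.card_sum, Fintype.card_fin] at this
    omega
  rintro (⟨z1, z2⟩ | e) hy
  · replace hy : (SG n m).Adj (a, 0) (z1, z2) := hy
    rw [SimpleGraph.boxProd_adj] at hy
    rcases hy with ⟨⟨hne, h0⟩, h2⟩ | ⟨⟨hne, h0⟩, h2⟩
    · simp only at h2; subst h2
      rcases h0 with h0 | h0
      · exact absurd h0 ha
      · subst h0; exact ⟨Sum.inl 0, rfl⟩
    · simp only at h2; subst h2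
      refine ⟨Sum.inr (Sum.inr (Sum.inl (z2.pred (Ne.symm hne)))), ?_⟩
      simp only [f, Fin.succ_pred]
  · replace hy : (a, (0:Fin (m+1))) ∈ (e : Sym2 _) := hy
    rcases edge_cases e with ⟨u, hu, c, rfl⟩ | ⟨a', w, hw, rfl⟩
    · simp only [hEdge, Sym2.mem_iff] at hy
      rcases hy with hy | hy
      · rw [Prod.ext_iff] at hy
        exact absurd hy.1 ha
      · rw [Prod.ext_iff] at hy
        obtain ⟨h1, h2⟩ := hy
        subst h1; subst h2
        exact ⟨Sum.inr (Sum.inl 0), congrArg Sum.inr (Subtype.ext rfl)⟩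
    · simp only [vEdge, Sym2.mem_iff] at hy
      rcases hy with hy | hy
      · rw [Prod.ext_iff] at hy
        obtain ⟨h1, -⟩ := hy
        subst h1
        refine ⟨Sum.inr (Sum.inr (Sum.inr (w.pred hw))), ?_⟩
        refine congrArg Sum.inr (Subtype.ext ?_)
        show s((a,0),(a,(w.pred hw).succ)) = s((a,0),(a,w))
        rw [Fin.succ_pred]
      · rw [Prod.ext_iff] at hy
        exact absurd hy.2.symm hw

lemma ub_iii {n m : ℕ} (b : Fin (m+1)) (hb : b ≠ 0) :
    ((TG n m).neighborSet (Sum.inl ((0:Fin (n+1)), b))).ncard ≤ 2*n+2 := by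
  classical
  let f : Fin 1 ⊕ Fin 1 ⊕ Fin n ⊕ Fin n → (Fin (n+1) × Fin (m+1)) ⊕ (SG n m).edgeSet :=
    fun i => match i with
    | .inl _ => Sum.inl (0, 0)
    | .inr (.inl _) => Sum.inr (vEdge n m 0 b hb)
    | .inr (.inr (.inl u)) => Sum.inl (u.succ, b)
    | .inr (.inr (.inr u)) => Sum.inr (hEdge n m u.succ (Fin.succ_ne_zero u) b)
  have := ncard_le_of_subset_range f ((TG n m).neighborSet (Sum.inl (0,b))) ?_
  · simp only [Nat.card_eq_fintype_card, Fintype.card_sum, Fintype.card_fin] at this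
    omega
  rintro (⟨z1, z2⟩ | e) hy
  · replace hy : (SG n m).Adj (0, b) (z1, z2) := hy
    rw [SimpleGraph.boxProd_adj] at hy
    rcases hy with ⟨⟨hne, h0⟩, h2⟩ | ⟨⟨hne, h0⟩, h2⟩
    · simp only at h2; subst h2
      refine ⟨Sum.inr (Sum.inr (Sum.inl (z1.pred (Ne.symm hne)))), ?_⟩
      simp only [f, Fin.succ_pred]
    · simp only at h2; subst h2
      rcases h0 with h0 | h0
      · exact absurd h0 hb
      · subst h0; exact ⟨Sum.inl 0, rfl⟩
  · replace hy : ((0:Fin (n+1)), b) ∈ (e : Sym2 _) := hy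
    rcases edge_cases e with ⟨u, hu, c, rfl⟩ | ⟨a', w, hw, rfl⟩
    · simp only [hEdge, Sym2.mem_iff] at hy
      rcases hy with hy | hy
      · rw [Prod.ext_iff] at hy
        obtain ⟨-, h2⟩ := hy
        subst h2
        refine ⟨Sum.inr (Sum.inr (Sum.inr (u.pred hu))), ?_⟩
        refine congrArg Sum.inr (Subtype.ext ?_)
        show s((0,b),((u.pred hu).succ,b)) = s((0,b),(u,b))
        rw [Fin.succ_pred]
      · rw [Prod.ext_iff] at hy
        exact absurd hy.1.symm hu
    · simp only [vEdge, Sym2.mem_iff] at hy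
      rcases hy with hy | hy
      · rw [Prod.ext_iff] at hy
        exact absurd hy.2 hb
      · rw [Prod.ext_iff] at hy
        obtain ⟨h1, h2⟩ := hy
        subst h1; subst h2
        exact ⟨Sum.inr (Sum.inl 0), congrArg Sum.inr (Subtype.ext rfl)⟩

lemma ub_iv {n m : ℕ} (a : Fin (n+1)) (b : Fin (m+1)) (ha : a ≠ 0) (hb : b ≠ 0) :
    ((TG n m).neighborSet (Sum.inr (hEdge n m a ha b))).ncard ≤ n+4 := by
  classical
  let f : Fin 1 ⊕ Fin 1 ⊕ Fin 1 ⊕ Fin 1 ⊕ Fin n → (Fin (n+1) × Fin (m+1)) ⊕ (SG n m).edgeSet :=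
    fun i => match i with
    | .inl _ => Sum.inl (0, b)
    | .inr (.inl _) => Sum.inl (a, b)
    | .inr (.inr (.inl _)) => Sum.inr (vEdge n m 0 b hb)
    | .inr (.inr (.inr (.inl _))) => Sum.inr (vEdge n m a b hb)
    | .inr (.inr (.inr (.inr u))) => Sum.inr (hEdge n m u.succ (Fin.succ_ne_zero u) b)
  have := ncard_le_of_subset_range f ((TG n m).neighborSet (Sum.inr (hEdge n m a ha b))) ?_
  · simp only [Nat.card_eq_fintype_card, Fintype.card_sum, Fintype.card_fin] at this
    omega
  rintro (z | e') hy
  · replace hy : z ∈ ((hEdge n m a ha b : (SG n m).edgeSet) : Sym2 _) := hy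
    simp only [hEdge, Sym2.mem_iff] at hy
    rcases hy with rfl | rfl
    · exact ⟨Sum.inl 0, rfl⟩
    · exact ⟨Sum.inr (Sum.inl 0), rfl⟩
  · obtain ⟨hne, w, hwe, hwf⟩ :
        hEdge n m a ha b ≠ e' ∧ ∃ w, w ∈ ((hEdge n m a ha b : (SG n m).edgeSet) : Sym2 (Fin (n+1) × Fin (m+1)))
          ∧ w ∈ (e' : Sym2 (Fin (n+1) × Fin (m+1))) := hy
    simp only [hEdge, Sym2.mem_iff] at hwe
    rcases edge_cases e' with ⟨u, hu, c, rfl⟩ | ⟨a', w', hw', rfl⟩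
    · simp only [hEdge, Sym2.mem_iff] at hwf
      rcases hwe with rfl | rfl
      · rcases hwf with hy | hy
        · rw [Prod.ext_iff] at hy
          obtain ⟨-, h2⟩ := hy
          subst h2
          refine ⟨Sum.inr (Sum.inr (Sum.inr (Sum.inr (u.pred hu)))), ?_⟩
          refine congrArg Sum.inr (Subtype.ext ?_)
          show s((0,b),((u.pred hu).succ,b)) = s((0,b),(u,b))
          rw [Fin.succ_pred]
        · rw [Prod.ext_iff] at hy
          exact absurd hy.1.symm hu
      · rcases hwf with hy | hy
        · rw [Prod.ext_iff] at hy
          exact absurd hy.1 ha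
        · rw [Prod.ext_iff] at hy
          obtain ⟨h1, h2⟩ := hy
          subst h1; subst h2
          exact absurd (Subtype.ext rfl) hne
    · simp only [vEdge, Sym2.mem_iff] at hwf
      rcases hwe with rfl | rfl
      · rcases hwf with hy | hy
        · rw [Prod.ext_iff] at hy
          exact absurd hy.2 hb
        · rw [Prod.ext_iff] at hy
          obtain ⟨h1, h2⟩ := hy
          subst h1; subst h2
          exact ⟨Sum.inr (Sum.inr (Sum.inl 0)), congrArg Sum.inr (Subtype.ext rfl)⟩
      · rcases hwf with hy | hy
        · rw [Prod.ext_iff] at hy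
          exact absurd hy.2 hb
        · rw [Prod.ext_iff] at hy
          obtain ⟨h1, h2⟩ := hy
          subst h1; subst h2
          exact ⟨Sum.inr (Sum.inr (Sum.inr (Sum.inl 0))), congrArg Sum.inr (Subtype.ext rfl)⟩

lemma ub_v {n m : ℕ} (a : Fin (n+1)) (b : Fin (m+1)) (ha : a ≠ 0) (hb : b ≠ 0) :
    ((TG n m).neighborSet (Sum.inr (vEdge n m a b hb))).ncard ≤ m+4 := by
  classical
  let f : Fin 1 ⊕ Fin 1 ⊕ Fin 1 ⊕ Fin 1 ⊕ Fin m → (Fin (n+1) × Fin (m+1)) ⊕ (SG n m).edgeSet :=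
    fun i => match i with
    | .inl _ => Sum.inl (a, 0)
    | .inr (.inl _) => Sum.inl (a, b)
    | .inr (.inr (.inl _)) => Sum.inr (hEdge n m a ha 0)
    | .inr (.inr (.inr (.inl _))) => Sum.inr (hEdge n m a ha b)
    | .inr (.inr (.inr (.inr v))) => Sum.inr (vEdge n m a v.succ (Fin.succ_ne_zero v))
  have := ncard_le_of_subset_range f ((TG n m).neighborSet (Sum.inr (vEdge n m a b hb))) ?_
  · simp only [Nat.card_eq_fintype_card, Fintype.card_sum, Fintype.card_fin] at this
    omega
  rintro (z | e') hy
  · replace hy : z ∈ ((vEdge n m a b hb : (SG n m).edgeSet) : Sym2 _) := hy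
    simp only [vEdge, Sym2.mem_iff] at hy
    rcases hy with rfl | rfl
    · exact ⟨Sum.inl 0, rfl⟩
    · exact ⟨Sum.inr (Sum.inl 0), rfl⟩
  · obtain ⟨hne, w, hwe, hwf⟩ :
        vEdge n m a b hb ≠ e' ∧ ∃ w, w ∈ ((vEdge n m a b hb : (SG n m).edgeSet) : Sym2 (Fin (n+1) × Fin (m+1)))
          ∧ w ∈ (e' : Sym2 (Fin (n+1) × Fin (m+1))) := hy
    simp only [vEdge, Sym2.mem_iff] at hwe
    rcases edge_cases e' with ⟨u, hu, c, rfl⟩ | ⟨a', w', hw', rfl⟩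
    · simp only [hEdge, Sym2.mem_iff] at hwf
      rcases hwe with rfl | rfl
      · rcases hwf with hy | hy
        · rw [Prod.ext_iff] at hy
          exact absurd hy.1 ha
        · rw [Prod.ext_iff] at hy
          obtain ⟨h1, h2⟩ := hy
          subst h1; subst h2
          exact ⟨Sum.inr (Sum.inr (Sum.inl 0)), congrArg Sum.inr (Subtype.ext rfl)⟩
      · rcases hwf with hy | hy
        · rw [Prod.ext_iff] at hy
          exact absurd hy.1 ha
        · rw [Prod.ext_iff] at hy
          obtain ⟨h1, h2⟩ := hy
          subst h1; subst h2
          exact ⟨Sum.inr (Sum.inr (Sum.inr (Sum.inl 0))), congrArg Sum.inr (Subtype.ext rfl)⟩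
    · simp only [vEdge, Sym2.mem_iff] at hwf
      rcases hwe with rfl | rfl
      · rcases hwf with hy | hy
        · rw [Prod.ext_iff] at hy
          obtain ⟨h1, -⟩ := hy
          subst h1
          refine ⟨Sum.inr (Sum.inr (Sum.inr (Sum.inr (w'.pred hw')))), ?_⟩
          refine congrArg Sum.inr (Subtype.ext ?_)
          show s((a,0),(a,(w'.pred hw').succ)) = s((a,0),(a,w'))
          rw [Fin.succ_pred]
        · rw [Prod.ext_iff] at hy
          exact absurd hy.2.symm hw'
      · rcases hwf with hy | hy
        · rw [Prod.ext_iff] at hy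
          exact absurd hy.2 hb
        · rw [Prod.ext_iff] at hy
          obtain ⟨h1, h2⟩ := hy
          subst h1; subst h2
          refine ⟨Sum.inr (Sum.inr (Sum.inr (Sum.inr (b.pred hb)))), ?_⟩
          refine congrArg Sum.inr (Subtype.ext ?_)
          show s((a,0),(a,(b.pred hb).succ)) = s((a,0),(a,b))
          rw [Fin.succ_pred]

lemma deg_b {n m : ℕ} (b : Fin (m+1)) (hb : b ≠ 0) :
    2*n+2 ≤ ((TG n m).neighborSet (Sum.inl (0, b))).ncard := by
  classical
  let f : Fin n ⊕ Fin n ⊕ Fin 1 ⊕ Fin 1 → (Fin (n+1) × Fin (m+1)) ⊕ (SG n m).edgeSet :=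
    fun i => match i with
    | .inl u => Sum.inl (u.succ, b)
    | .inr (.inl u) => Sum.inr (hEdge n m u.succ (Fin.succ_ne_zero u) b)
    | .inr (.inr (.inl _)) => Sum.inl (0, 0)
    | .inr (.inr (.inr _)) => Sum.inr (vEdge n m 0 b hb)
  have hcard : Nat.card (Fin n ⊕ Fin n ⊕ Fin 1 ⊕ Fin 1) = 2*n+2 := by
    simp [Nat.card_eq_fintype_card]; ring
  have hinj : Function.Injective f := by
    rintro (u | u | u | u) (v | v | v | v) h <;>
      simp_all [f, hEdge, vEdge, Sym2.eq_iff, Prod.ext_iff, Fin.succ_ne_zero, hb,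
        Fin.succ_injective n |>.eq_iff, Subtype.ext_iff] <;>
      first
      | rfl
      | (exact absurd h.symm (Fin.succ_ne_zero _))
      | omega
  have hsub : Set.range f ⊆ (TG n m).neighborSet (Sum.inl (0, b)) := by
    rintro x ⟨i, rfl⟩
    rcases i with u | u | u | u <;>
      simp only [f, SimpleGraph.mem_neighborSet]
    · show (SG n m).Adj (0, b) (u.succ, b)
      rw [SimpleGraph.boxProd_adj]
      exact Or.inl ⟨⟨(Fin.succ_ne_zero u).symm, Or.inl rfl⟩, rfl⟩
    · show ((0:Fin (n+1)), b) ∈ (hEdge n m u.succ (Fin.succ_ne_zero u) b : Sym2 _)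
      simp [hEdge]
    · show (SG n m).Adj (0, b) (0, 0)
      rw [SimpleGraph.boxProd_adj]
      exact Or.inr ⟨⟨hb, Or.inr rfl⟩, rfl⟩
    · show ((0:Fin (n+1)), b) ∈ (vEdge n m 0 b hb : Sym2 _)
      simp [vEdge]
  calc 2*n+2 = Nat.card (Fin n ⊕ Fin n ⊕ Fin 1 ⊕ Fin 1) := hcard.symm
    _ ≤ _ := le_ncard_of_range_subset f _ hinj hsub


def FA (n m : ℕ) : Fin 1 ⊕ Fin m ⊕ Fin n → (Fin (n+1) × Fin (m+1)) ⊕ (SG n m).edgeSet :=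
  fun i => match i with
  | .inl _ => Sum.inl (0, 0)
  | .inr (.inl v) => Sum.inr (vEdge n m 0 v.succ (Fin.succ_ne_zero v))
  | .inr (.inr u) => Sum.inr (hEdge n m u.succ (Fin.succ_ne_zero u) 0)

lemma big_deg_mem {n m : ℕ} (hm : 3 ≤ m) (hmn : m ≤ n)
    (x : (Fin (n+1) × Fin (m+1)) ⊕ (SG n m).edgeSet)
    (hx : 2*n+3 ≤ ((TG n m).neighborSet x).ncard) : x ∈ Set.range (FA n m) := by
  have hn : 3 ≤ n := hm.trans hmn
  rcases x with ⟨a, b⟩ | e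
  · by_cases ha : a = 0 <;> by_cases hb : b = 0
    · subst ha; subst hb
      exact ⟨Sum.inl 0, rfl⟩
    · subst ha
      have := ub_iii (n := n) b hb
      omega
    · subst hb
      have := ub_ii (m := m) a ha
      omega
    · have := ub_i a b ha hb
      omega
  · rcases edge_cases e with ⟨u, hu, c, rfl⟩ | ⟨a', w, hw, rfl⟩
    · by_cases hc : c = 0
      · subst hc
        refine ⟨Sum.inr (Sum.inr (u.pred hu)), ?_⟩
        show Sum.inr (hEdge n m (u.pred hu).succ _ 0) = _
        refine congrArg Sum.inr (Subtype.ext ?_)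
        show s(((0:Fin (n+1)),(0:Fin (m+1))),((u.pred hu).succ,0)) = s((0,0),(u,0))
        rw [Fin.succ_pred]
      · have := ub_iv u c hu hc
        omega
    · by_cases ha' : a' = 0
      · subst ha'
        refine ⟨Sum.inr (Sum.inl (w.pred hw)), ?_⟩
        refine congrArg Sum.inr (Subtype.ext ?_)
        show s(((0:Fin (n+1)),(0:Fin (m+1))),(0,(w.pred hw).succ)) = s((0,0),(0,w))
        rw [Fin.succ_pred]
      · have := ub_v a' w ha' hw
        omega


theorem mDegree_totalGraph_boxProd_star_small (n m : ℕ) (hm : 3 ≤ m) (hmn : m ≤ n)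
    (h : n ≤ 2 * (m - 1)) :
    IsGreatest (mDegreeSet (totalGraph ((_root_.starGraph n).boxProd (_root_.starGraph m)))) (2 * n + 3) := by
  classical
  have hn : 3 ≤ n := hm.trans hmn
  constructor
  · -- membership
    let FS : Fin 1 ⊕ Fin m ⊕ Fin (n+2-m) ⊕ Fin n →
        (Fin (n+1) × Fin (m+1)) ⊕ (SG n m).edgeSet :=
      fun i => match i with
      | .inl _ => Sum.inl (0, 0)
      | .inr (.inl v) => Sum.inl (0, v.succ)
      | .inr (.inr (.inl j)) =>
          Sum.inr (vEdge n m 0 ⟨j.val+1, by have := j.isLt; omega⟩ (by simp [Fin.ext_iff]))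
      | .inr (.inr (.inr u)) => Sum.inr (hEdge n m u.succ (Fin.succ_ne_zero u) 0)
    have hinj : Function.Injective FS := by
      rintro (u | u | u | u) (v | v | v | v) hEq <;>
        simp_all [FS, hEdge, vEdge, Subtype.ext_iff, Sym2.eq_iff, Prod.ext_iff, Fin.ext_iff,
          Fin.val_succ] <;>
        omega
    refine ⟨Set.range FS, Set.finite_range FS, ?_, ?_⟩
    · rw [ncard_range_eq FS hinj]
      simp only [Nat.card_eq_fintype_card, Fintype.card_sum, Fintype.card_fin]
      omega
    · rintro x ⟨i, rfl⟩
      rcases i with u | u | u | u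
      · exact le_trans (by omega) (deg_a (n := n) (m := m) (by omega))
      · exact le_trans (by omega) (deg_b (n := n) u.succ (Fin.succ_ne_zero u))
      · exact le_trans (by omega)
          (deg_c (n := n) (⟨u.val+1, by have := u.isLt; omega⟩ : Fin (m+1)) (by simp [Fin.ext_iff]))
      · exact le_trans (by omega) (deg_d (by omega : 1 ≤ m) h u.succ (Fin.succ_ne_zero u))
  · -- upper bound
    intro k hk
    by_contra hlt
    push_neg at hlt
    obtain ⟨S, hfin, hcard, hdeg⟩ := hk
    have hsub : S ⊆ Set.range (FA n m) := by
      intro x hx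
      exact big_deg_mem hm hmn x (le_trans (by omega) (hdeg x hx))
    have hle := ncard_le_of_subset_range (FA n m) S hsub
    rw [hcard] at hle
    simp only [Nat.card_eq_fintype_card, Fintype.card_sum, Fintype.card_fin] at hle
    omega
end

section
/- For n, m ≥ 2, the m-degree of the cube (S_n □ S_m)^3 equals 2m + 2n. -/
open SimpleGraph

lemma starGraph_connected (n : ℕ) : (_root_.starGraph n).Connected := by
  rw [connected_iff]
  refine ⟨fun u v => ?_, ⟨0⟩⟩
  have h : ∀ w : Fin (n+1), (_root_.starGraph n).Reachable w 0 := by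
    intro w
    by_cases hw : w = 0
    · exact hw ▸ Reachable.refl _
    · exact SimpleGraph.Adj.reachable ⟨hw, Or.inr rfl⟩
  exact (h u).trans (h v).symm

lemma starGraph_dist {n : ℕ} (u v : Fin (n+1)) :
    (_root_.starGraph n).dist u v = if u = v then 0 else if u = 0 ∨ v = 0 then 1 else 2 := by
  split_ifs with h1 h2
  · subst h1; exact SimpleGraph.dist_self
  · rw [SimpleGraph.dist_eq_one_iff_adj]; exact ⟨h1, h2⟩
  · push_neg at h2
    apply le_antisymm
    · have a1 : (_root_.starGraph n).Adj u 0 := ⟨h2.1, Or.inr rfl⟩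
      have a2 : (_root_.starGraph n).Adj 0 v := ⟨fun h => h2.2 h.symm, Or.inl rfl⟩
      have := SimpleGraph.dist_le (Walk.cons a1 (Walk.cons a2 Walk.nil))
      simpa using this
    · have h0 : (_root_.starGraph n).dist u v ≠ 0 := by
        rw [SimpleGraph.dist_ne_zero_iff_ne_and_reachable]
        exact ⟨h1, (starGraph_connected n).preconnected u v⟩
      have h1' : (_root_.starGraph n).dist u v ≠ 1 := by
        rw [Ne, SimpleGraph.dist_eq_one_iff_adj]
        rintro ⟨-, h | h⟩
        · exact h2.1 h
        · exact h2.2 h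
      omega

lemma boxProd_dist {α β : Type*} {G : SimpleGraph α} {H : SimpleGraph β}
    (hG : G.Connected) (hH : H.Connected) (x y : α × β) :
    (G.boxProd H).dist x y = G.dist x.1 y.1 + H.dist x.2 y.2 := by
  refine le_antisymm ?_ ?_
  · obtain ⟨w1, hw1⟩ := hG.exists_walk_length_eq_dist x.1 y.1
    obtain ⟨w2, hw2⟩ := hH.exists_walk_length_eq_dist x.2 y.2
    have := SimpleGraph.dist_le ((w1.boxProdLeft H x.2).append (w2.boxProdRight G y.1))
    have e1 : (w1.boxProdLeft H x.2).length = w1.length := Walk.length_map _ _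
    have e2 : (w2.boxProdRight G y.1).length = w2.length := Walk.length_map _ _
    rw [Walk.length_append, e1, e2, hw1, hw2] at this
    exact this
  · obtain ⟨w, hw⟩ := (hG.boxProd hH).exists_walk_length_eq_dist x y
    rw [← hw]
    clear hw
    induction w with
    | nil => simp
    | @cons a b c h p ih =>
      rw [SimpleGraph.boxProd_adj] at h
      simp only [Walk.length_cons]
      rcases h with ⟨h, he⟩ | ⟨h, he⟩
      · have t := hG.dist_triangle (u := a.1) (v := b.1) (w := c.1)
        have h1 : G.dist a.1 b.1 = 1 := SimpleGraph.dist_eq_one_iff_adj.2 h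
        rw [he]
        omega
      · have t := hH.dist_triangle (u := a.2) (v := b.2) (w := c.2)
        have h1 : H.dist a.2 b.2 = 1 := SimpleGraph.dist_eq_one_iff_adj.2 h
        rw [he]
        omega

lemma power_adj (n m : ℕ) (v w : Fin (n+1) × Fin (m+1)) :
    (graphPower ((_root_.starGraph n).boxProd (_root_.starGraph m)) 3).Adj v w ↔
      v ≠ w ∧ (v.1 = w.1 ∨ v.1 = 0 ∨ w.1 = 0 ∨ v.2 = w.2 ∨ v.2 = 0 ∨ w.2 = 0) := by
  show (0 < _ ∧ _ ≤ 3) ↔ _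
  rw [boxProd_dist (starGraph_connected n) (starGraph_connected m), starGraph_dist, starGraph_dist,
    Ne, Prod.ext_iff, not_and_or]
  split_ifs <;> constructor <;> intro h <;> simp_all <;> tauto

open Finset in
lemma neigh_A {n m : ℕ} (v : Fin (n+1) × Fin (m+1)) (hv : v.1 = 0 ∨ v.2 = 0) :
    ((graphPower ((_root_.starGraph n).boxProd (_root_.starGraph m)) 3).neighborSet v).ncard
      = (n+1) * (m+1) - 1 := by
  have hset : (graphPower ((_root_.starGraph n).boxProd (_root_.starGraph m)) 3).neighborSet v
      = ↑(Finset.univ.erase v) := by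
    ext w
    simp only [mem_neighborSet, power_adj, Finset.coe_erase, Set.mem_diff,
      Set.mem_univ, Set.mem_singleton_iff, true_and]
    simp only [Ne, eq_comm, Finset.coe_univ, Set.mem_univ, true_and]
    tauto
  rw [hset, Set.ncard_coe_finset, Finset.card_erase_of_mem (Finset.mem_univ v)]
  simp [Fintype.card_prod]

open Finset in
lemma neigh_B {n m : ℕ} (v : Fin (n+1) × Fin (m+1)) (hn : 2 ≤ n) (hm : 2 ≤ m)
    (h1 : v.1 ≠ 0) (h2 : v.2 ≠ 0) :
    ((graphPower ((_root_.starGraph n).boxProd (_root_.starGraph m)) 3).neighborSet v).ncard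
      = 2 * m + 2 * n - 1 := by
  classical
  set A : Finset (Fin (n+1) × Fin (m+1)) := (({v.1, 0} : Finset (Fin (n+1))) ×ˢ Finset.univ).erase v with hA
  set B : Finset (Fin (n+1) × Fin (m+1)) :=
    (Finset.univ \ ({v.1, 0} : Finset (Fin (n+1)))) ×ˢ ({v.2, 0} : Finset (Fin (m+1))) with hB
  have hset : (graphPower ((_root_.starGraph n).boxProd (_root_.starGraph m)) 3).neighborSet v = ↑(A ∪ B) := by
    ext w
    simp only [mem_neighborSet, power_adj, hA, hB, Finset.coe_union, Set.mem_union,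
      Finset.coe_erase, Set.mem_diff, Finset.mem_coe, Finset.mem_product, Finset.mem_erase,
      Finset.mem_union, Finset.mem_sdiff, Finset.mem_insert, Finset.mem_singleton,
      Finset.mem_univ, true_and, and_true, Set.mem_singleton_iff,
      Finset.coe_sdiff, Finset.coe_insert, Finset.coe_singleton, Finset.mem_product]
    have h1' : ¬ v.1 = 0 := h1
    have h2' : ¬ v.2 = 0 := h2
    simp only [Ne, Prod.ext_iff, not_and_or, eq_comm] at h1' h2' ⊢
    tauto
  rw [hset, Set.ncard_coe_finset]
  have hdisj : Disjoint A B := by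
    rw [Finset.disjoint_left]
    intro x hx hx'
    simp only [hA, Finset.mem_erase, Finset.mem_product] at hx
    simp only [hB, Finset.mem_product, Finset.mem_sdiff] at hx'
    exact hx'.1.2 hx.2.1
  rw [Finset.card_union_of_disjoint hdisj]
  have hc1 : ({v.1, 0} : Finset (Fin (n+1))).card = 2 := by
    rw [Finset.card_insert_of_notMem (by simpa using h1), Finset.card_singleton]
  have hc2 : ({v.2, 0} : Finset (Fin (m+1))).card = 2 := by
    rw [Finset.card_insert_of_notMem (by simpa using h2), Finset.card_singleton]
  have hAcard : A.card = 2 * (m + 1) - 1 := by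
    rw [hA, Finset.card_erase_of_mem, Finset.card_product, hc1]
    · simp [mul_comm]
    · simp [Finset.mem_product]
  have hBcard : B.card = (n - 1) * 2 := by
    rw [hB, Finset.card_product, Finset.card_sdiff_of_subset (Finset.subset_univ _), hc2, hc1]
    simp
  rw [hAcard, hBcard]
  omega

lemma Zcard (n m : ℕ) :
    ({w : Fin (n+1) × Fin (m+1) | w.1 = 0 ∨ w.2 = 0}).ncard = n + m + 1 := by
  classical
  have hset : {w : Fin (n+1) × Fin (m+1) | w.1 = 0 ∨ w.2 = 0}
      = ↑((({0} : Finset (Fin (n+1))) ×ˢ Finset.univ) ∪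
          ((Finset.univ \ ({0} : Finset (Fin (n+1)))) ×ˢ ({0} : Finset (Fin (m+1))))) := by
    ext w
    simp only [Set.mem_setOf_eq, Finset.coe_union, Set.mem_union, Finset.mem_coe,
      Finset.mem_product, Finset.mem_singleton, Finset.mem_sdiff, Finset.mem_univ, true_and,
      and_true]
    tauto
  rw [hset, Set.ncard_coe_finset, Finset.card_union_of_disjoint, Finset.card_product,
    Finset.card_product, Finset.card_sdiff_of_subset (Finset.subset_univ _)]
  · simp [mul_comm]
    omega
  · rw [Finset.disjoint_left]
    intro x hx hx'
    simp only [Finset.mem_product, Finset.mem_singleton] at hx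
    simp only [Finset.mem_product, Finset.mem_sdiff, Finset.mem_singleton] at hx'
    exact hx'.1.2 hx.1


theorem mDegree_cube_boxProd_star (n m : ℕ) (hn : 2 ≤ n) (hm : 2 ≤ m) :
    IsGreatest (mDegreeSet (graphPower ((_root_.starGraph n).boxProd (_root_.starGraph m)) 3)) (2 * m + 2 * n) := by
  classical
  have hdeg : ∀ v : Fin (n+1) × Fin (m+1),
      2*m+2*n-1 ≤ ((graphPower ((_root_.starGraph n).boxProd (_root_.starGraph m)) 3).neighborSet v).ncard := by
    intro v
    by_cases hv : v.1 = 0 ∨ v.2 = 0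
    · rw [neigh_A v hv]
      have : 2*m+2*n ≤ (n+1)*(m+1) := by nlinarith
      omega
    · push_neg at hv
      rw [neigh_B v hn hm hv.1 hv.2]
  constructor
  · have hcard : 2*m+2*n ≤ (Finset.univ : Finset (Fin (n+1) × Fin (m+1))).card := by
      simp only [Finset.card_univ, Fintype.card_prod, Fintype.card_fin]
      nlinarith
    obtain ⟨t, -, ht⟩ := Finset.exists_subset_card_eq hcard
    exact ⟨↑t, t.finite_toSet, by simp [ht], fun v _ => hdeg v⟩
  · intro k hk
    obtain ⟨S, hSfin, hScard, hSdeg⟩ := hk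
    by_contra hlt
    push_neg at hlt
    have hsub : S ⊆ {w : Fin (n+1) × Fin (m+1) | w.1 = 0 ∨ w.2 = 0} := by
      intro v hv
      by_contra hv0
      simp only [Set.mem_setOf_eq] at hv0
      push_neg at hv0
      have h := hSdeg v hv
      rw [neigh_B v hn hm hv0.1 hv0.2] at h
      omega
    have hle := Set.ncard_le_ncard hsub (Set.toFinite _)
    rw [hScard, Zcard] at hle
    omega
end

section
/- The b-chromatic number of the rook graph K_3 □ K_3 equals 3; that is, K_3 □ K_3 admits no b-coloring with 4 colors. -/
open SimpleGraph

instance boxProdDecRel {V W : Type*} (G : SimpleGraph V) (H : SimpleGraph W) [DecidableRel G.Adj]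
    [DecidableRel H.Adj] [DecidableEq V] [DecidableEq W] :
    DecidableRel (G.boxProd H).Adj := fun x y =>
  decidable_of_iff _ (SimpleGraph.boxProd_adj (G := G) (H := H) (x := x) (y := y)).symm

abbrev G3 := ((⊤ : SimpleGraph (Fin 3)).boxProd (⊤ : SimpleGraph (Fin 3)))

theorem isB_comp {V : Type*} {G : SimpleGraph V} {k : ℕ} {c : V → Fin k}
    (σ : Equiv.Perm (Fin k)) (h : IsBColoring G k c) :
    IsBColoring G k (fun v => σ (c v)) := by
  obtain ⟨h1, h2⟩ := h
  refine ⟨fun u v huv hne => h1 u v huv (σ.injective hne), fun i => ?_⟩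
  obtain ⟨v, hv, hvb⟩ := h2 (σ.symm i)
  refine ⟨v, by simp [hv], fun j hj => ?_⟩
  obtain ⟨u, hu, hcu⟩ := hvb (σ.symm j) (fun hh => hj (by simpa using congrArg σ hh))
  exact ⟨u, hu, by simp [hcu]⟩

theorem exists_perm {K : ℕ} (a b c : Fin (K+4)) (hab : a ≠ b) (hac : a ≠ c) (hbc : b ≠ c) :
    ∃ σ : Equiv.Perm (Fin (K+4)), σ a = 0 ∧ σ b = 1 ∧ σ c = 2 := by
  have h01 : (0 : Fin (K+4)) ≠ 1 := by simp [Fin.ext_iff]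
  have h02 : (0 : Fin (K+4)) ≠ 2 := by simp [Fin.ext_iff, Nat.mod_eq_of_lt (show 2 < K + 4 by omega)]
  have h12 : (1 : Fin (K+4)) ≠ 2 := by simp [Fin.ext_iff, Nat.mod_eq_of_lt (show 2 < K + 4 by omega)]
  set σ1 := Equiv.swap a 0 with hs1
  have hb1 : σ1 b ≠ 0 := fun hh => hab (σ1.injective (by rw [hh, Equiv.swap_apply_left]))
  have hc1 : σ1 c ≠ 0 := fun hh => hac (σ1.injective (by rw [hh, Equiv.swap_apply_left]))
  set σ2 := Equiv.swap (σ1 b) 1 with hs2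
  have h2z : σ2 0 = 0 := Equiv.swap_apply_of_ne_of_ne (Ne.symm hb1) h01
  have hc2a : σ2 (σ1 c) ≠ 0 := fun hh => hc1 (σ2.injective (hh.trans h2z.symm))
  have hc2b : σ2 (σ1 c) ≠ 1 := fun hh =>
    hbc (σ1.injective (σ2.injective ((Equiv.swap_apply_left (σ1 b) 1).trans hh.symm)))
  set σ3 := Equiv.swap (σ2 (σ1 c)) 2 with hs3
  refine ⟨σ1.trans (σ2.trans σ3), ?_, ?_, ?_⟩
  · have : σ1 a = 0 := Equiv.swap_apply_left a 0
    simp only [Equiv.trans_apply, this, h2z]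
    exact Equiv.swap_apply_of_ne_of_ne (Ne.symm hc2a) h02
  · have hb2 : σ2 (σ1 b) = 1 := Equiv.swap_apply_left _ _
    simp only [Equiv.trans_apply, hb2]
    exact Equiv.swap_apply_of_ne_of_ne (Ne.symm hc2b) h12
  · simp only [Equiv.trans_apply]
    exact Equiv.swap_apply_left _ _

set_option maxHeartbeats 4000000 in
set_option maxRecDepth 100000 in
set_option synthInstance.maxHeartbeats 1000000 in
set_option synthInstance.maxSize 5000 in
theorem key4 : ∀ e00 : Fin 4, e00 = 0 → ∀ e01 : Fin 4, e01 = 1 → e00 ≠ e01 → ∀ e02 : Fin 4, e02 = 2 → e00 ≠ e02 → e01 ≠ e02 → ∀ e10 : Fin 4, e00 ≠ e10 → ∀ e11 : Fin 4, e01 ≠ e11 → e10 ≠ e11 → ∀ e12 : Fin 4, e02 ≠ e12 → e10 ≠ e12 → e11 ≠ e12 → ∀ e20 : Fin 4, e00 ≠ e20 → e10 ≠ e20 → ∀ e21 : Fin 4, e01 ≠ e21 → e11 ≠ e21 → e20 ≠ e21 → ∀ e22 : Fin 4, e02 ≠ e22 → e12 ≠ e22 → e20 ≠ e22 → e21 ≠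 e22 →
    ¬ (∀ m : Fin 4, (e00 = m ∧ ∀ n : Fin 4, n ≠ m → (e01 = n ∨ e02 = n ∨ e10 = n ∨ e20 = n)) ∨ (e01 = m ∧ ∀ n : Fin 4, n ≠ m → (e00 = n ∨ e02 = n ∨ e11 = n ∨ e21 = n)) ∨ (e02 = m ∧ ∀ n : Fin 4, n ≠ m → (e00 = n ∨ e01 = n ∨ e12 = n ∨ e22 = n)) ∨ (e10 = m ∧ ∀ n : Fin 4, n ≠ m → (e11 = n ∨ e12 = n ∨ e00 = n ∨ e20 = n)) ∨ (e11 = m ∧ ∀ n : Fin 4, n ≠ m → (e10 = n ∨ e12 = n ∨ e01 = n ∨ e21 = n)) ∨ (e12 = m ∧ ∀ n : Fin 4, n ≠ m → (e10 = n ∨ e11 = n ∨ e02 = n ∨ e22 = n)) ∨ (e20 = m ∧ ∀ n : Fin 4, n ≠ m → (e21 = n ∨ e22 = n ∨ e00 = n ∨ e10 = n)) ∨ (e21 = m ∧ ∀ n : Fin 4, n ≠ m → (e20 = n ∨ e22 = n ∨ e01 = n ∨ e11 = n)) ∨ (e22 = m ∧ ∀ n : Fin 4, n ≠ m → (e20 =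 n ∨ e21 = n ∨ e02 = n ∨ e12 = n))) := by
  decide

set_option maxHeartbeats 4000000 in
set_option maxRecDepth 100000 in
set_option synthInstance.maxHeartbeats 1000000 in
set_option synthInstance.maxSize 5000 in
theorem key5 : ∀ e00 : Fin 5, e00 = 0 → ∀ e01 : Fin 5, e01 = 1 → e00 ≠ e01 → ∀ e02 : Fin 5, e02 = 2 → e00 ≠ e02 → e01 ≠ e02 → ∀ e10 : Fin 5, e00 ≠ e10 → ∀ e11 : Fin 5, e01 ≠ e11 → e10 ≠ e11 → ∀ e12 : Fin 5, e02 ≠ e12 → e10 ≠ e12 → e11 ≠ e12 → ∀ e20 : Fin 5, e00 ≠ e20 → e10 ≠ e20 → ∀ e21 : Fin 5, e01 ≠ e21 → e11 ≠ e21 → e20 ≠ e21 → ∀ e22 : Fin 5, e02 ≠ e22 → e12 ≠ e22 → e20 ≠ e22 → e21 ≠ e22 →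
    ¬ (∀ m : Fin 5, (e00 = m ∧ ∀ n : Fin 5, n ≠ m → (e01 = n ∨ e02 = n ∨ e10 = n ∨ e20 = n)) ∨ (e01 = m ∧ ∀ n : Fin 5, n ≠ m → (e00 = n ∨ e02 = n ∨ e11 = n ∨ e21 = n)) ∨ (e02 = m ∧ ∀ n : Fin 5, n ≠ m → (e00 = n ∨ e01 = n ∨ e12 = n ∨ e22 = n)) ∨ (e10 = m ∧ ∀ n : Fin 5, n ≠ m → (e11 = n ∨ e12 = n ∨ e00 = n ∨ e20 = n)) ∨ (e11 = m ∧ ∀ n : Fin 5, n ≠ m → (e10 = n ∨ e12 = n ∨ e01 = n ∨ e21 = n)) ∨ (e12 = m ∧ ∀ n : Fin 5, n ≠ m → (e10 = n ∨ e11 = n ∨ e02 = n ∨ e22 = n)) ∨ (e20 = m ∧ ∀ n : Fin 5, n ≠ m → (e21 = n ∨ e22 = n ∨ e00 = n ∨ e10 = n)) ∨ (e21 = m ∧ ∀ n : Fin 5, n ≠ m → (e20 = n ∨ e22 = n ∨ e01 = n ∨ e11 = n)) ∨ (e22 = m ∧ ∀ n : Fin 5, n ≠ m → (e20 = n ∨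 e21 = n ∨ e02 = n ∨ e12 = n))) := by
  decide

theorem no4 : ¬ HasBColoring G3 4 := by
  rintro ⟨c, hc⟩
  obtain ⟨σ, hσ0, hσ1, hσ2⟩ := exists_perm (K := 0) (c (0,0)) (c (0,1)) (c (0,2))
    (hc.1 (0,0) (0,1) (by decide)) (hc.1 (0,0) (0,2) (by decide)) (hc.1 (0,1) (0,2) (by decide))
  have hd : IsBColoring G3 4 (fun v => σ (c v)) := isB_comp σ hc
  refine key4 (σ (c (0,0))) hσ0 (σ (c (0,1))) hσ1 (hd.1 (0,0) (0,1) (by decide)) (σ (c (0,2))) hσ2 (hd.1 (0,0) (0,2) (by decide)) (hd.1 (0,1) (0,2) (by decide)) (σ (c (1,0))) (hd.1 (0,0) (1,0) (by decide)) (σ (c (1,1))) (hd.1 (0,1) (1,1) (by decide)) (hd.1 (1,0) (1,1) (by decide)) (σ (c (1,2))) (hd.1 (0,2) (1,2) (by decide)) (hd.1 (1,0) (1,2) (by decide)) (hd.1 (1,1) (1,2) (by decide)) (σ (c (2,0))) (hd.1 (0,0) (2,0) (by decide)) (hd.1 (1,0) (2,0) (by decide)) (σ (c (2,1))) (hd.1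 (0,1) (2,1) (by decide)) (hd.1 (1,1) (2,1) (by decide)) (hd.1 (2,0) (2,1) (by decide)) (σ (c (2,2))) (hd.1 (0,2) (2,2) (by decide)) (hd.1 (1,2) (2,2) (by decide)) (hd.1 (2,0) (2,2) (by decide)) (hd.1 (2,1) (2,2) (by decide)) ?_
  intro m
  obtain ⟨⟨vx, vy⟩, hcm, hcr⟩ := hd.2 m
  fin_cases vx <;> fin_cases vy
  · refine Or.inl ⟨hcm, fun n hn => ?_⟩
    obtain ⟨⟨ux, uy⟩, hadj, hcu⟩ := hcr n hn
    fin_cases ux <;> fin_cases uy <;>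
      first
        | exact absurd hadj (by decide)
        | exact Or.inl hcu
        | exact Or.inr (Or.inl hcu)
        | exact Or.inr (Or.inr (Or.inl hcu))
        | exact Or.inr (Or.inr (Or.inr hcu))
  · refine Or.inr (Or.inl ⟨hcm, fun n hn => ?_⟩)
    obtain ⟨⟨ux, uy⟩, hadj, hcu⟩ := hcr n hn
    fin_cases ux <;> fin_cases uy <;>
      first
        | exact absurd hadj (by decide)
        | exact Or.inl hcu
        | exact Or.inr (Or.inl hcu)
        | exact Or.inr (Or.inr (Or.inl hcu))
        | exact Or.inr (Or.inr (Or.inr hcu))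
  · refine Or.inr (Or.inr (Or.inl ⟨hcm, fun n hn => ?_⟩))
    obtain ⟨⟨ux, uy⟩, hadj, hcu⟩ := hcr n hn
    fin_cases ux <;> fin_cases uy <;>
      first
        | exact absurd hadj (by decide)
        | exact Or.inl hcu
        | exact Or.inr (Or.inl hcu)
        | exact Or.inr (Or.inr (Or.inl hcu))
        | exact Or.inr (Or.inr (Or.inr hcu))
  · refine Or.inr (Or.inr (Or.inr (Or.inl ⟨hcm, fun n hn => ?_⟩)))
    obtain ⟨⟨ux, uy⟩, hadj, hcu⟩ := hcr n hn
    fin_cases ux <;> fin_cases uy <;>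
      first
        | exact absurd hadj (by decide)
        | exact Or.inl hcu
        | exact Or.inr (Or.inl hcu)
        | exact Or.inr (Or.inr (Or.inl hcu))
        | exact Or.inr (Or.inr (Or.inr hcu))
  · refine Or.inr (Or.inr (Or.inr (Or.inr (Or.inl ⟨hcm, fun n hn => ?_⟩))))
    obtain ⟨⟨ux, uy⟩, hadj, hcu⟩ := hcr n hn
    fin_cases ux <;> fin_cases uy <;>
      first
        | exact absurd hadj (by decide)
        | exact Or.inl hcu
        | exact Or.inr (Or.inl hcu)
        | exact Or.inr (Or.inr (Or.inl hcu))
        | exact Or.inr (Or.inr (Or.inr hcu))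
  · refine Or.inr (Or.inr (Or.inr (Or.inr (Or.inr (Or.inl ⟨hcm, fun n hn => ?_⟩)))))
    obtain ⟨⟨ux, uy⟩, hadj, hcu⟩ := hcr n hn
    fin_cases ux <;> fin_cases uy <;>
      first
        | exact absurd hadj (by decide)
        | exact Or.inl hcu
        | exact Or.inr (Or.inl hcu)
        | exact Or.inr (Or.inr (Or.inl hcu))
        | exact Or.inr (Or.inr (Or.inr hcu))
  · refine Or.inr (Or.inr (Or.inr (Or.inr (Or.inr (Or.inr (Or.inl ⟨hcm, fun n hn => ?_⟩))))))
    obtain ⟨⟨ux, uy⟩, hadj, hcu⟩ := hcr n hn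
    fin_cases ux <;> fin_cases uy <;>
      first
        | exact absurd hadj (by decide)
        | exact Or.inl hcu
        | exact Or.inr (Or.inl hcu)
        | exact Or.inr (Or.inr (Or.inl hcu))
        | exact Or.inr (Or.inr (Or.inr hcu))
  · refine Or.inr (Or.inr (Or.inr (Or.inr (Or.inr (Or.inr (Or.inr (Or.inl ⟨hcm, fun n hn => ?_⟩)))))))
    obtain ⟨⟨ux, uy⟩, hadj, hcu⟩ := hcr n hn
    fin_cases ux <;> fin_cases uy <;>
      first
        | exact absurd hadj (by decide)
        | exact Or.inl hcu
        | exact Or.inr (Or.inl hcu)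
        | exact Or.inr (Or.inr (Or.inl hcu))
        | exact Or.inr (Or.inr (Or.inr hcu))
  · refine Or.inr (Or.inr (Or.inr (Or.inr (Or.inr (Or.inr (Or.inr (Or.inr (⟨hcm, fun n hn => ?_⟩))))))))
    obtain ⟨⟨ux, uy⟩, hadj, hcu⟩ := hcr n hn
    fin_cases ux <;> fin_cases uy <;>
      first
        | exact absurd hadj (by decide)
        | exact Or.inl hcu
        | exact Or.inr (Or.inl hcu)
        | exact Or.inr (Or.inr (Or.inl hcu))
        | exact Or.inr (Or.inr (Or.inr hcu))

theorem no5 : ¬ HasBColoring G3 5 := by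
  rintro ⟨c, hc⟩
  obtain ⟨σ, hσ0, hσ1, hσ2⟩ := exists_perm (K := 1) (c (0,0)) (c (0,1)) (c (0,2))
    (hc.1 (0,0) (0,1) (by decide)) (hc.1 (0,0) (0,2) (by decide)) (hc.1 (0,1) (0,2) (by decide))
  have hd : IsBColoring G3 5 (fun v => σ (c v)) := isB_comp σ hc
  refine key5 (σ (c (0,0))) hσ0 (σ (c (0,1))) hσ1 (hd.1 (0,0) (0,1) (by decide)) (σ (c (0,2))) hσ2 (hd.1 (0,0) (0,2) (by decide)) (hd.1 (0,1) (0,2) (by decide)) (σ (c (1,0))) (hd.1 (0,0) (1,0) (by decide)) (σ (c (1,1))) (hd.1 (0,1) (1,1) (by decide)) (hd.1 (1,0) (1,1) (by decide)) (σ (c (1,2))) (hd.1 (0,2) (1,2) (by decide)) (hd.1 (1,0) (1,2) (by decide)) (hd.1 (1,1) (1,2) (by decide)) (σ (c (2,0))) (hd.1 (0,0) (2,0) (by decide)) (hd.1 (1,0) (2,0) (by decide)) (σ (c (2,1))) (hd.1 (0,1) (2,1) (by decide)) (hd.1 (1,1) (2,1) (by decide)) (hd.1 (2,0) (2,1) (by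 decide)) (σ (c (2,2))) (hd.1 (0,2) (2,2) (by decide)) (hd.1 (1,2) (2,2) (by decide)) (hd.1 (2,0) (2,2) (by decide)) (hd.1 (2,1) (2,2) (by decide)) ?_
  intro m
  obtain ⟨⟨vx, vy⟩, hcm, hcr⟩ := hd.2 m
  fin_cases vx <;> fin_cases vy
  · refine Or.inl ⟨hcm, fun n hn => ?_⟩
    obtain ⟨⟨ux, uy⟩, hadj, hcu⟩ := hcr n hn
    fin_cases ux <;> fin_cases uy <;>
      first
        | exact absurd hadj (by decide)
        | exact Or.inl hcu
        | exact Or.inr (Or.inl hcu)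
        | exact Or.inr (Or.inr (Or.inl hcu))
        | exact Or.inr (Or.inr (Or.inr hcu))
  · refine Or.inr (Or.inl ⟨hcm, fun n hn => ?_⟩)
    obtain ⟨⟨ux, uy⟩, hadj, hcu⟩ := hcr n hn
    fin_cases ux <;> fin_cases uy <;>
      first
        | exact absurd hadj (by decide)
        | exact Or.inl hcu
        | exact Or.inr (Or.inl hcu)
        | exact Or.inr (Or.inr (Or.inl hcu))
        | exact Or.inr (Or.inr (Or.inr hcu))
  · refine Or.inr (Or.inr (Or.inl ⟨hcm, fun n hn => ?_⟩))
    obtain ⟨⟨ux, uy⟩, hadj, hcu⟩ := hcr n hn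
    fin_cases ux <;> fin_cases uy <;>
      first
        | exact absurd hadj (by decide)
        | exact Or.inl hcu
        | exact Or.inr (Or.inl hcu)
        | exact Or.inr (Or.inr (Or.inl hcu))
        | exact Or.inr (Or.inr (Or.inr hcu))
  · refine Or.inr (Or.inr (Or.inr (Or.inl ⟨hcm, fun n hn => ?_⟩)))
    obtain ⟨⟨ux, uy⟩, hadj, hcu⟩ := hcr n hn
    fin_cases ux <;> fin_cases uy <;>
      first
        | exact absurd hadj (by decide)
        | exact Or.inl hcu
        | exact Or.inr (Or.inl hcu)
        | exact Or.inr (Or.inr (Or.inl hcu))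
        | exact Or.inr (Or.inr (Or.inr hcu))
  · refine Or.inr (Or.inr (Or.inr (Or.inr (Or.inl ⟨hcm, fun n hn => ?_⟩))))
    obtain ⟨⟨ux, uy⟩, hadj, hcu⟩ := hcr n hn
    fin_cases ux <;> fin_cases uy <;>
      first
        | exact absurd hadj (by decide)
        | exact Or.inl hcu
        | exact Or.inr (Or.inl hcu)
        | exact Or.inr (Or.inr (Or.inl hcu))
        | exact Or.inr (Or.inr (Or.inr hcu))
  · refine Or.inr (Or.inr (Or.inr (Or.inr (Or.inr (Or.inl ⟨hcm, fun n hn => ?_⟩)))))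
    obtain ⟨⟨ux, uy⟩, hadj, hcu⟩ := hcr n hn
    fin_cases ux <;> fin_cases uy <;>
      first
        | exact absurd hadj (by decide)
        | exact Or.inl hcu
        | exact Or.inr (Or.inl hcu)
        | exact Or.inr (Or.inr (Or.inl hcu))
        | exact Or.inr (Or.inr (Or.inr hcu))
  · refine Or.inr (Or.inr (Or.inr (Or.inr (Or.inr (Or.inr (Or.inl ⟨hcm, fun n hn => ?_⟩))))))
    obtain ⟨⟨ux, uy⟩, hadj, hcu⟩ := hcr n hn
    fin_cases ux <;> fin_cases uy <;>
      first
        | exact absurd hadj (by decide)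
        | exact Or.inl hcu
        | exact Or.inr (Or.inl hcu)
        | exact Or.inr (Or.inr (Or.inl hcu))
        | exact Or.inr (Or.inr (Or.inr hcu))
  · refine Or.inr (Or.inr (Or.inr (Or.inr (Or.inr (Or.inr (Or.inr (Or.inl ⟨hcm, fun n hn => ?_⟩)))))))
    obtain ⟨⟨ux, uy⟩, hadj, hcu⟩ := hcr n hn
    fin_cases ux <;> fin_cases uy <;>
      first
        | exact absurd hadj (by decide)
        | exact Or.inl hcu
        | exact Or.inr (Or.inl hcu)
        | exact Or.inr (Or.inr (Or.inl hcu))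
        | exact Or.inr (Or.inr (Or.inr hcu))
  · refine Or.inr (Or.inr (Or.inr (Or.inr (Or.inr (Or.inr (Or.inr (Or.inr (⟨hcm, fun n hn => ?_⟩))))))))
    obtain ⟨⟨ux, uy⟩, hadj, hcu⟩ := hcr n hn
    fin_cases ux <;> fin_cases uy <;>
      first
        | exact absurd hadj (by decide)
        | exact Or.inl hcu
        | exact Or.inr (Or.inl hcu)
        | exact Or.inr (Or.inr (Or.inl hcu))
        | exact Or.inr (Or.inr (Or.inr hcu))

theorem mem3 : HasBColoring G3 3 := by
  refine ⟨fun p => p.1 + p.2, ?_⟩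
  unfold IsBColoring
  decide

theorem deg4 : ∀ v : Fin 3 × Fin 3, G3.degree v = 4 := by decide

theorem upper : ∀ k ∈ bChromaticSet G3, k ≤ 3 := by
  rintro k ⟨c, hc⟩
  by_contra hk
  push_neg at hk
  have h4 : 4 ≤ k := hk
  have hk5 : k ≤ 5 := by
    have i0 : Fin k := ⟨0, by omega⟩
    obtain ⟨v, hv, hvb⟩ := hc.2 i0
    classical
    set u : Fin k → Fin 3 × Fin 3 := fun j =>
      if hj : j ≠ i0 then (hvb j hj).choose else v with hu
    have hus : ∀ j (hj : j ≠ i0), G3.Adj v (u j) ∧ c (u j) = j := by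
      intro j hj
      simp only [hu, dif_pos hj]
      exact ⟨(hvb j hj).choose_spec.1, (hvb j hj).choose_spec.2⟩
    have hcard : (Finset.univ.erase i0).card ≤ (G3.neighborFinset v).card := by
      refine Finset.card_le_card_of_injOn u ?_ ?_
      · intro j hj
        rw [Finset.mem_coe, SimpleGraph.mem_neighborFinset]
        exact (hus j (Finset.ne_of_mem_erase hj)).1
      · intro j1 hj1 j2 hj2 he
        have h1 := (hus j1 (Finset.ne_of_mem_erase hj1)).2
        have h2 := (hus j2 (Finset.ne_of_mem_erase hj2)).2
        rw [← h1, ← h2, he]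
    rw [Finset.card_erase_of_mem (Finset.mem_univ _), Finset.card_univ, Fintype.card_fin] at hcard
    have := deg4 v
    rw [SimpleGraph.degree] at this
    omega
  interval_cases k
  · exact no4 ⟨c, hc⟩
  · exact no5 ⟨c, hc⟩


theorem rook_3_3_bChromatic :
    IsGreatest
      (bChromaticSet ((⊤ : SimpleGraph (Fin 3)).boxProd (⊤ : SimpleGraph (Fin 3)))) 3 ∧
    ¬ HasBColoring ((⊤ : SimpleGraph (Fin 3)).boxProd (⊤ : SimpleGraph (Fin 3))) 4 := by
  exact ⟨⟨mem3, upper⟩, no4⟩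
end
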